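/- arXiv:1403.1834 — 6 statements merged into one kernel-verified Lean document; each statement's English description precedes it below -/
import Mathlib

section
/- Let R be a noncommutative ring containing an invertible central element q, and let x, y ∈ R satisfy x·y = q²·y·x. Then for every n ≥ 0, (x + y)^n = Σ_{k=0}^{n} qbinom(n,k) · q^{k(n-k)} · y^k · x^{n-k}, where qbinom(n,k) is the symmetric Gaussian binomial coefficient (q-binomial with [n] = (q^n - q^{-n})/(q - q^{-1})). (This is the q-binomial theorem underlying the q-exponential factorization e_q(y)e_q(x) = e_q(x+y).) -/
def qbinom {R : Type*} [Ring R] (q : Rˣ) : ℕ → ℕ → R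
  | _, 0 => 1
  | 0, _ + 1 => 0
  | n + 1, k + 1 => ((q⁻¹ : Rˣ) : R) ^ (k + 1) * qbinom q n (k + 1)
      + ((q : R)) ^ (n - k) * qbinom q n k

lemma qbinom_eq_zero {R : Type*} [Ring R] (q : Rˣ) :
    ∀ n k : ℕ, n < k → qbinom q n k = 0 := by
  intro n
  induction n with
  | zero =>
    intro k hk
    match k, hk with
    | k + 1, _ => rfl
  | succ n ih =>
    intro k hk
    match k, hk with
    | k + 1, hk =>
      have h1 : n < k + 1 := by omega
      have h2 : n < k := by omega
      show ((q⁻¹ : Rˣ) : R) ^ (k + 1) * qbinom q n (k + 1)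
          + ((q : R)) ^ (n - k) * qbinom q n k = 0
      rw [ih _ h1, ih _ h2, mul_zero, mul_zero, add_zero]

/-- **q-binomial theorem.** If `q` is a central invertible element of a ring `R`
and `x y : R` satisfy `x * y = q² * y * x`, then
`(x + y)^n = Σ_{k=0}^n qbinom(n,k) q^{k(n-k)} y^k x^{n-k}`. -/
theorem q_binomial_theorem {R : Type*} [Ring R] (q : Rˣ)
    (hq : ∀ a : R, (q : R) * a = a * (q : R))
    (x y : R) (hxy : x * y = (q : R) ^ 2 * y * x) (n : ℕ) :
    (x + y) ^ n =
      ∑ k ∈ Finset.range (n + 1),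
        qbinom q n k * (q : R) ^ (k * (n - k)) * y ^ k * x ^ (n - k) := by
  have hc : ∀ a : R, Commute (q : R) a := hq
  have hc' : ∀ a : R, Commute ((q⁻¹ : Rˣ) : R) a := fun a => (hc a).units_inv_left
  have hpow1 : ∀ m : ℕ, ((q⁻¹ : Rˣ) : R) ^ m * (q : R) ^ m = 1 := by
    intro m
    rw [← Units.val_pow_eq_pow_val, ← Units.val_pow_eq_pow_val, ← Units.val_mul]
    simp
  have hmove : ∀ (m : ℕ) (a b : R), a * ((q : R) ^ m * b) = (q : R) ^ m * (a * b) := by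
    intro m a b
    rw [← mul_assoc, ← ((hc a).pow_left m).eq, mul_assoc]
  have hx : ∀ m : ℕ, x ^ m * y = (q : R) ^ (2 * m) * (y * x ^ m) := by
    intro m
    induction m with
    | zero => simp
    | succ m ihm =>
      calc x ^ (m + 1) * y = x ^ m * (x * y) := by rw [pow_succ, mul_assoc]
        _ = x ^ m * ((q : R) ^ 2 * (y * x)) := by rw [hxy, mul_assoc]
        _ = (q : R) ^ 2 * (x ^ m * y * x) := by rw [hmove 2 (x ^ m), ← mul_assoc (x ^ m)]
        _ = (q : R) ^ 2 * ((q : R) ^ (2 * m) * (y * x ^ m) * x) := by rw [ihm]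
        _ = (q : R) ^ (2 * (m + 1)) * (y * x ^ (m + 1)) := by
            rw [← mul_assoc ((q : R) ^ 2), ← mul_assoc ((q : R) ^ 2), ← pow_add,
              mul_assoc, mul_assoc, ← pow_succ]
            have h : 2 + 2 * m = 2 * (m + 1) := by ring
            rw [h]
  induction n with
  | zero => simp [qbinom]
  | succ n ih =>
    have hL : (x + y) ^ (n + 1) =
        ((∑ k ∈ Finset.range n,
            qbinom q n (k + 1) * (q : R) ^ ((k + 1) * (n - (k + 1))) * y ^ (k + 1)
              * x ^ (n - (k + 1) + 1)) + x ^ (n + 1))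
        + ∑ k ∈ Finset.range (n + 1),
            qbinom q n k * (q : R) ^ ((k + 2) * (n - k)) * y ^ (k + 1) * x ^ (n - k) := by
      calc (x + y) ^ (n + 1)
          = (∑ k ∈ Finset.range (n + 1),
              qbinom q n k * (q : R) ^ (k * (n - k)) * y ^ k * x ^ (n - k)) * (x + y) := by
            rw [pow_succ, ih]
        _ = ∑ k ∈ Finset.range (n + 1),
              (qbinom q n k * (q : R) ^ (k * (n - k)) * y ^ k * x ^ (n - k + 1)
                + qbinom q n k * (q : R) ^ ((k + 2) * (n - k)) * y ^ (k + 1) * x ^ (n - k)) := by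
            rw [Finset.sum_mul]
            refine Finset.sum_congr rfl fun k _ => ?_
            rw [mul_add]
            congr 1
            · rw [mul_assoc, ← pow_succ]
            · simp only [mul_assoc]
              rw [hx (n - k), hmove (2 * (n - k)) (y ^ k),
                ← mul_assoc ((q : R) ^ (k * (n - k))), ← pow_add,
                ← mul_assoc (y ^ k), ← pow_succ]
              have he : k * (n - k) + 2 * (n - k) = (k + 2) * (n - k) := by ring
              rw [he]
        _ = (∑ k ∈ Finset.range (n + 1),
              qbinom q n k * (q : R) ^ (k * (n - k)) * y ^ k * x ^ (n - k + 1))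
            + ∑ k ∈ Finset.range (n + 1),
              qbinom q n k * (q : R) ^ ((k + 2) * (n - k)) * y ^ (k + 1) * x ^ (n - k) :=
            Finset.sum_add_distrib
        _ = _ := by
            rw [Finset.sum_range_succ']
            congr 2
            simp [qbinom]
    rw [hL]
    conv_rhs => rw [Finset.sum_range_succ']
    have hsplit : ∀ k ∈ Finset.range (n + 1),
        qbinom q (n + 1) (k + 1) * (q : R) ^ ((k + 1) * (n + 1 - (k + 1))) * y ^ (k + 1)
            * x ^ (n + 1 - (k + 1))
          = (((q⁻¹ : Rˣ) : R) ^ (k + 1) * qbinom q n (k + 1)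
              * (q : R) ^ ((k + 1) * (n - k)) * y ^ (k + 1) * x ^ (n - k))
            + qbinom q n k * (q : R) ^ ((k + 2) * (n - k)) * y ^ (k + 1) * x ^ (n - k) := by
      intro k _
      have hsub : n + 1 - (k + 1) = n - k := by omega
      rw [hsub]
      show (((q⁻¹ : Rˣ) : R) ^ (k + 1) * qbinom q n (k + 1)
          + ((q : R)) ^ (n - k) * qbinom q n k) * (q : R) ^ ((k + 1) * (n - k)) * y ^ (k + 1)
            * x ^ (n - k) = _
      rw [add_mul, add_mul, add_mul]
      congr 1
      rw [((hc (qbinom q n k)).pow_left (n - k)).eq, mul_assoc (qbinom q n k), ← pow_add]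
      have he : n - k + (k + 1) * (n - k) = (k + 2) * (n - k) := by ring
      rw [he]
    rw [Finset.sum_congr rfl hsplit, Finset.sum_add_distrib]
    have hG : (∑ k ∈ Finset.range (n + 1),
          ((q⁻¹ : Rˣ) : R) ^ (k + 1) * qbinom q n (k + 1)
            * (q : R) ^ ((k + 1) * (n - k)) * y ^ (k + 1) * x ^ (n - k))
        = ∑ k ∈ Finset.range n,
            qbinom q n (k + 1) * (q : R) ^ ((k + 1) * (n - (k + 1))) * y ^ (k + 1)
              * x ^ (n - (k + 1) + 1) := by
      rw [Finset.sum_range_succ, qbinom_eq_zero q n (n + 1) (by omega)]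
      simp only [mul_zero, zero_mul, add_zero]
      refine Finset.sum_congr rfl fun k hk => ?_
      have hk' : k < n := Finset.mem_range.mp hk
      have h1 : n - (k + 1) + 1 = n - k := by omega
      have h2 : (k + 1) * (n - k) = (k + 1) + (k + 1) * (n - (k + 1)) := by
        have h3 : n - k = (n - (k + 1)) + 1 := by omega
        rw [h3]; ring
      have h4 : ((q⁻¹ : Rˣ) : R) ^ (k + 1) * (q : R) ^ (k + 1 + (k + 1) * (n - (k + 1)))
          = (q : R) ^ ((k + 1) * (n - (k + 1))) := by
        rw [pow_add ((q : R)) (k + 1), ← mul_assoc, hpow1, one_mul]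
      rw [h1, ((hc' (qbinom q n (k + 1))).pow_left (k + 1)).eq,
        mul_assoc (qbinom q n (k + 1)), h2, h4]
    have hf0 : qbinom q (n + 1) 0 * (q : R) ^ (0 * (n + 1 - 0)) * y ^ 0 * x ^ (n + 1 - 0)
        = x ^ (n + 1) := by simp [qbinom]
    rw [hG, hf0]
    abel
end

section
/- Let R be a Q(q)-algebra (q transcendental) and x, y ∈ R with x·y = q²·y·x. Define the q-exponential e_q(z) = Σ_{n≥0} z^n q^{-n(n-1)/2}/[n]! as a formal power series in a formal variable t (replacing z by t·z), where [n]! = [1][2]⋯[n] with [n] = (q^n - q^{-n})/(q - q^{-1}). Then e_q(ty)·e_q(tx) = e_q(t(x+y)) as formal power series in t. -/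
open scoped PowerSeries

noncomputable section

/-- The symmetric quantum integer `[n] = (q^n - q^{-n})/(q - q^{-1})` for `q = X` in `ℚ(q)`. -/
def qInt (n : ℕ) : RatFunc ℚ :=
  ((RatFunc.X : RatFunc ℚ) ^ n - (RatFunc.X : RatFunc ℚ)⁻¹ ^ n) /
    ((RatFunc.X : RatFunc ℚ) - (RatFunc.X : RatFunc ℚ)⁻¹)

/-- The quantum factorial `[n]! = [1][2]⋯[n]`. -/
def qFact (n : ℕ) : RatFunc ℚ := ∏ k ∈ Finset.range n, qInt (k + 1)

/-- The q-exponential `e_q(t z) = Σ_{n ≥ 0} z^n q^{-n(n-1)/2}/[n]! · t^n`,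
as a formal power series in `t` with coefficients in a `ℚ(q)`-algebra `A`. -/
def qExp {A : Type*} [Ring A] [Algebra (RatFunc ℚ) A] (z : A) : PowerSeries A :=
  PowerSeries.mk fun n =>
    algebraMap (RatFunc ℚ) A ((RatFunc.X : RatFunc ℚ)⁻¹ ^ (n * (n - 1) / 2) / qFact n) * z ^ n

namespace QExpFactorAux

abbrev K := RatFunc ℚ

lemma hq : (RatFunc.X : K) ≠ 0 := RatFunc.X_ne_zero

lemma Xpow_ne_one {n : ℕ} (hn : 0 < n) : (RatFunc.X : K) ^ n ≠ 1 := by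
  intro h
  have hinj := IsFractionRing.injective (Polynomial ℚ) K
  have h2 : (Polynomial.X : Polynomial ℚ) ^ n = 1 := by
    apply hinj; simpa [map_pow, RatFunc.algebraMap_X] using h
  have := congrArg Polynomial.natDegree h2
  simp [Polynomial.natDegree_X_pow] at this
  omega

lemma hden : (RatFunc.X : K) - (RatFunc.X : K)⁻¹ ≠ 0 := by
  intro h
  have h1 : (RatFunc.X : K) = (RatFunc.X : K)⁻¹ := sub_eq_zero.mp h
  have : (RatFunc.X : K) ^ 2 = 1 := by
    rw [pow_two]; nth_rewrite 2 [h1]; exact mul_inv_cancel₀ hq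
  exact Xpow_ne_one (by norm_num) this

lemma qInt_ne_zero {n : ℕ} (hn : 0 < n) : qInt n ≠ 0 := by
  have hnum : (RatFunc.X : K) ^ n - (RatFunc.X : K)⁻¹ ^ n ≠ 0 := by
    intro h
    have h1 : (RatFunc.X : K) ^ n = ((RatFunc.X : K) ^ n)⁻¹ := by
      rw [← inv_pow]; exact sub_eq_zero.mp h
    have : (RatFunc.X : K) ^ (2 * n) = 1 := by
      rw [two_mul, pow_add]; nth_rewrite 2 [h1]
      exact mul_inv_cancel₀ (pow_ne_zero _ hq)
    exact Xpow_ne_one (by omega) this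
  exact div_ne_zero hnum hden

lemma qFact_ne_zero (n : ℕ) : qFact n ≠ 0 := by
  rw [qFact, Finset.prod_ne_zero_iff]
  exact fun i _ => qInt_ne_zero (by omega)

lemma qFact_zero : qFact 0 = 1 := by simp [qFact]

lemma qFact_succ (n : ℕ) : qFact (n + 1) = qFact n * qInt (n + 1) :=
  Finset.prod_range_succ _ n

lemma qInt_zpow (n : ℕ) :
    qInt n = ((RatFunc.X : K) ^ (n : ℤ) - (RatFunc.X : K) ^ (-(n : ℤ))) /
      ((RatFunc.X : K) - (RatFunc.X : K)⁻¹) := by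
  rw [qInt, zpow_natCast, zpow_neg, zpow_natCast, inv_pow]

lemma pascal_num (i n : ℤ) :
    (RatFunc.X : K) ^ i * ((RatFunc.X : K) ^ (n + 1 - i) - (RatFunc.X : K) ^ (-(n + 1 - i)))
      + (RatFunc.X : K) ^ (i - (n + 1)) * ((RatFunc.X : K) ^ i - (RatFunc.X : K) ^ (-i))
    = (RatFunc.X : K) ^ (n + 1 : ℤ) - (RatFunc.X : K) ^ (-(n + 1) : ℤ) := by
  rw [mul_sub, mul_sub, ← zpow_add₀ hq, ← zpow_add₀ hq, ← zpow_add₀ hq, ← zpow_add₀ hq]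
  have e1 : i + (n + 1 - i) = n + 1 := by ring
  have e2 : i + -(n + 1 - i) = 2 * i - (n + 1) := by ring
  have e3 : i - (n + 1) + i = 2 * i - (n + 1) := by ring
  have e4 : i - (n + 1) + -i = -(n + 1) := by ring
  rw [e1, e2, e3, e4]; ring

lemma pascal (i n : ℕ) (h2 : i ≤ n) :
    qInt (n + 1) = (RatFunc.X : K) ^ (i : ℤ) * qInt (n + 1 - i)
      + (RatFunc.X : K) ^ ((i : ℤ) - (n : ℤ) - 1) * qInt i := by
  rw [qInt_zpow, qInt_zpow, qInt_zpow]
  have hc : ((n + 1 - i : ℕ) : ℤ) = (n : ℤ) + 1 - (i : ℤ) := by omega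
  rw [hc]
  rw [← mul_div_assoc, ← mul_div_assoc, ← add_div]
  congr 1
  have h3 : (i : ℤ) - (n : ℤ) - 1 = (i : ℤ) - ((n : ℤ) + 1) := by ring
  have h4 : ((n + 1 : ℕ) : ℤ) = (n : ℤ) + 1 := by push_cast; ring
  rw [h3, h4]
  exact (pascal_num (i : ℤ) (n : ℤ)).symm

/-- The (twisted) q-binomial coefficient `q^{i(n-i)} [n]!/([i]![n-i]!)`. -/
def C (n i : ℕ) : K :=
  (RatFunc.X : K) ^ (i * (n - i)) * (qFact n / (qFact i * qFact (n - i)))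

lemma C_zero (n : ℕ) : C n 0 = 1 := by
  simp [C, qFact_zero, div_self (qFact_ne_zero n)]

lemma C_diag (n : ℕ) : C n n = 1 := by
  simp [C, qFact_zero, div_self (qFact_ne_zero n)]

lemma C_rec (n k : ℕ) (hk : k + 1 ≤ n) :
    C (n + 1) (k + 1)
      = (RatFunc.X : K) ^ (2 * (k + 1)) * C n (k + 1) + C n k := by
  obtain ⟨j, rfl⟩ : ∃ j, n = (k + 1) + j := ⟨n - (k + 1), by omega⟩
  have e1 : (k + 1) + j + 1 - (k + 1) = j + 1 := by omega
  have e2 : (k + 1) + j - (k + 1) = j := by omega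
  have e3 : (k + 1) + j - k = j + 1 := by omega
  have hp := pascal (k + 1) ((k + 1) + j) (by omega)
  have e4 : (k + 1) + j + 1 - (k + 1) = j + 1 := by omega
  rw [e4] at hp
  have e5 : ((k + 1 : ℕ) : ℤ) - (((k + 1) + j : ℕ) : ℤ) - 1 = -((j : ℤ) + 1) := by
    push_cast; ring
  have e6 : (-((j : ℤ) + 1)) = -(((j + 1 : ℕ)) : ℤ) := by push_cast; ring
  rw [e5, e6, zpow_neg, zpow_natCast, zpow_natCast] at hp
  rw [C, C, C, e1, e2, e3, qFact_succ ((k + 1) + j), hp, qFact_succ j, qFact_succ k]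
  have h5 : ((RatFunc.X : K) ^ (j + 1)) ≠ 0 := pow_ne_zero _ hq
  have hQ := hq
  have h1 := qFact_ne_zero k
  have h2 := qFact_ne_zero j
  have h3 := qInt_ne_zero (n := k + 1) (by omega)
  have h4 := qInt_ne_zero (n := j + 1) (by omega)
  field_simp
  ring

lemma T_add (i j : ℕ) :
    (i + j) * ((i + j) - 1) / 2 = i * (i - 1) / 2 + j * (j - 1) / 2 + i * j := by
  match i, j with
  | 0, j => simp
  | i + 1, 0 => simp
  | a + 1, b + 1 =>
    have key : ∀ m : ℕ, 2 * ((m + 1) * m / 2) = (m + 1) * m := fun m =>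
      Nat.mul_div_cancel' (by rw [mul_comm]; exact (Nat.even_mul_succ_self m).two_dvd)
    apply Nat.eq_of_mul_eq_mul_left (show 0 < 2 by norm_num)
    have e : a + 1 + (b + 1) = (a + b + 1) + 1 := by omega
    rw [e]
    simp only [Nat.add_sub_cancel]
    rw [key (a + b + 1)]
    conv_rhs => rw [mul_add, mul_add, key a, key b]
    ring

/-- The scalar coefficient of the q-exponential. -/
def aCoef (k : ℕ) : K := (RatFunc.X : K)⁻¹ ^ (k * (k - 1) / 2) / qFact k

lemma aCoef_mul (i j : ℕ) : aCoef i * aCoef j = aCoef (i + j) * C (i + j) i := by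
  unfold aCoef C
  have e2 : (i + j) - i = j := by omega
  rw [e2, T_add]
  have h1 := qFact_ne_zero i
  have h2 := qFact_ne_zero j
  have h3 := qFact_ne_zero (i + j)
  have hx : ((RatFunc.X : K)⁻¹) ≠ 0 := inv_ne_zero hq
  have h5 : (RatFunc.X : K) ^ (i * (i - 1) / 2) * qFact i *
      ((RatFunc.X : K) ^ (j * (j - 1) / 2) * qFact j) ≠ 0 :=
    mul_ne_zero (mul_ne_zero (pow_ne_zero _ hq) h1) (mul_ne_zero (pow_ne_zero _ hq) h2)
  have h6 : (RatFunc.X : K) ^ (i * (i - 1) / 2 + j * (j - 1) / 2 + i * j) * qFact (i + j) *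
      (qFact i * qFact j) ≠ 0 :=
    mul_ne_zero (mul_ne_zero (pow_ne_zero _ hq) h3) (mul_ne_zero h1 h2)
  field_simp
  rw [pow_add, pow_add]
  have hX : (RatFunc.X : K) ^ (i * j) * (RatFunc.X : K)⁻¹ ^ (i * j) = 1 := by
    rw [← mul_pow, mul_inv_cancel₀ hq, one_pow]
  linear_combination (-((RatFunc.X : K)⁻¹ ^ (i * (i - 1) / 2) * (RatFunc.X : K)⁻¹ ^ (j * (j - 1) / 2))) * hX

section Binom
variable {A : Type*} [Ring A] [Algebra K A] (x y : A)
  (hxy : x * y = algebraMap K A ((RatFunc.X : K) ^ 2) * (y * x))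

include hxy in
lemma xy_comm (i : ℕ) :
    x * y ^ i = ((RatFunc.X : K) ^ (2 * i)) • (y ^ i * x) := by
  induction i with
  | zero => simp
  | succ n ih =>
    have hxy' : x * y = ((RatFunc.X : K) ^ 2) • (y * x) := by
      rw [hxy, Algebra.smul_def]
    calc x * y ^ (n + 1) = (x * y ^ n) * y := by rw [pow_succ, mul_assoc]
      _ = ((RatFunc.X : K) ^ (2 * n)) • (y ^ n * (x * y)) := by
          rw [ih, smul_mul_assoc, mul_assoc]
      _ = ((RatFunc.X : K) ^ (2 * n)) • (y ^ n * (((RatFunc.X : K) ^ 2) • (y * x))) := by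
          rw [hxy']
      _ = ((RatFunc.X : K) ^ (2 * (n + 1))) • (y ^ (n + 1) * x) := by
          rw [mul_smul_comm, smul_smul, ← pow_add, ← mul_assoc, ← pow_succ]
          have e : 2 * n + 2 = 2 * (n + 1) := by ring
          rw [e]

include hxy in
theorem qbinom (n : ℕ) :
    (x + y) ^ n = ∑ i ∈ Finset.range (n + 1), C n i • (y ^ i * x ^ (n - i)) := by
  induction n with
  | zero => simp [C_zero]
  | succ n ih =>
    rw [pow_succ', ih, add_mul, Finset.mul_sum, Finset.mul_sum]
    have hx2 : ∀ i ∈ Finset.range (n + 1),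
        x * (C n i • (y ^ i * x ^ (n - i)))
          = ((RatFunc.X : K) ^ (2 * i) * C n i) • (y ^ i * x ^ (n + 1 - i)) := by
      intro i hi
      rw [mul_smul_comm, ← mul_assoc, xy_comm x y hxy i, smul_mul_assoc, smul_smul,
        mul_assoc, ← pow_succ']
      have e : n - i + 1 = n + 1 - i := by
        have := Finset.mem_range.mp hi; omega
      rw [e, mul_comm (C n i)]
    have hy2 : ∀ i ∈ Finset.range (n + 1),
        y * (C n i • (y ^ i * x ^ (n - i)))
          = C n i • (y ^ (i + 1) * x ^ (n - i)) := by
      intro i _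
      rw [mul_smul_comm, ← mul_assoc, ← pow_succ']
    rw [Finset.sum_congr rfl hx2, Finset.sum_congr rfl hy2]
    rw [Finset.sum_range_succ'
      (fun i => ((RatFunc.X : K) ^ (2 * i) * C n i) • (y ^ i * x ^ (n + 1 - i))) n]
    rw [Finset.sum_range_succ (fun i => C n i • (y ^ (i + 1) * x ^ (n - i))) n]
    rw [Finset.sum_range_succ'
      (fun i => C (n + 1) i • (y ^ i * x ^ (n + 1 - i))) (n + 1)]
    rw [Finset.sum_range_succ
      (fun i => C (n + 1) (i + 1) • (y ^ (i + 1) * x ^ (n + 1 - (i + 1)))) n]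
    have edge1 : ((RatFunc.X : K) ^ (2 * 0) * C n 0) • ((y : A) ^ 0 * x ^ (n + 1 - 0))
        = C (n + 1) 0 • ((y : A) ^ 0 * x ^ (n + 1 - 0)) := by
      rw [C_zero, C_zero]; norm_num
    have edge2 : C n n • (y ^ (n + 1) * x ^ (n - n))
        = C (n + 1) (n + 1) • (y ^ (n + 1) * x ^ (n + 1 - (n + 1))) := by
      rw [C_diag, C_diag]; norm_num
    have main : ∀ i ∈ Finset.range n,
        ((RatFunc.X : K) ^ (2 * (i + 1)) * C n (i + 1)) • (y ^ (i + 1) * x ^ (n + 1 - (i + 1)))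
          + C n i • (y ^ (i + 1) * x ^ (n - i))
        = C (n + 1) (i + 1) • (y ^ (i + 1) * x ^ (n + 1 - (i + 1))) := by
      intro i hi
      have hi' : i + 1 ≤ n := Finset.mem_range.mp hi
      have e : n + 1 - (i + 1) = n - i := by omega
      rw [e, C_rec n i hi', add_smul]
    calc (∑ i ∈ Finset.range n,
            ((RatFunc.X : K) ^ (2 * (i + 1)) * C n (i + 1)) • (y ^ (i + 1) * x ^ (n + 1 - (i + 1)))
          + ((RatFunc.X : K) ^ (2 * 0) * C n 0) • ((y : A) ^ 0 * x ^ (n + 1 - 0)))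
        + (∑ i ∈ Finset.range n, C n i • (y ^ (i + 1) * x ^ (n - i))
          + C n n • (y ^ (n + 1) * x ^ (n - n)))
        = (∑ i ∈ Finset.range n,
            (((RatFunc.X : K) ^ (2 * (i + 1)) * C n (i + 1)) • (y ^ (i + 1) * x ^ (n + 1 - (i + 1)))
              + C n i • (y ^ (i + 1) * x ^ (n - i))))
          + C n n • (y ^ (n + 1) * x ^ (n - n))
          + ((RatFunc.X : K) ^ (2 * 0) * C n 0) • ((y : A) ^ 0 * x ^ (n + 1 - 0)) := by
          rw [Finset.sum_add_distrib]; abel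
      _ = (∑ i ∈ Finset.range n, C (n + 1) (i + 1) • (y ^ (i + 1) * x ^ (n + 1 - (i + 1))))
          + C (n + 1) (n + 1) • (y ^ (n + 1) * x ^ (n + 1 - (n + 1)))
          + C (n + 1) 0 • ((y : A) ^ 0 * x ^ (n + 1 - 0)) := by
          rw [Finset.sum_congr rfl main, edge1, edge2]

end Binom

lemma qExp_coeff {A : Type*} [Ring A] [Algebra K A] (z : A) (n : ℕ) :
    (PowerSeries.coeff n) (qExp z) = aCoef n • z ^ n := by
  rw [qExp, PowerSeries.coeff_mk, aCoef, Algebra.smul_def]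

end QExpFactorAux

open QExpFactorAux in
/-- **Factorization of the q-exponential.** If `x y = q² y x` in a `ℚ(q)`-algebra `A`
(with `q = X` the transcendental generator), then
`e_q(t y) · e_q(t x) = e_q(t (x + y))` as formal power series in `t`. -/
theorem qExp_factorization {A : Type*} [Ring A] [Algebra (RatFunc ℚ) A]
    (x y : A)
    (hxy : x * y = algebraMap (RatFunc ℚ) A ((RatFunc.X : RatFunc ℚ) ^ 2) * (y * x)) :
    qExp y * qExp x = qExp (x + y) := by
  ext n
  rw [PowerSeries.coeff_mul, Finset.Nat.sum_antidiagonal_eq_sum_range_succ_mk,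
    qExp_coeff (x + y) n, qbinom x y hxy n, Finset.smul_sum]
  apply Finset.sum_congr rfl
  intro i hi
  have hi' : i ≤ n := by
    have := Finset.mem_range.mp hi; omega
  have e : i + (n - i) = n := by omega
  rw [qExp_coeff y i, qExp_coeff x (n - i), smul_mul_assoc, mul_smul_comm, smul_smul,
    aCoef_mul i (n - i), e, smul_smul]

end
end

section
/- With S, ψ, χ as above (Sψ = qψS, Sχ = qχS, ψχ = χψ, all invertible), set B = S + ψS⁻¹χ, α = S⁻¹χS⁻¹(1 + ψS⁻¹χS⁻¹)⁻¹, γ = (1 + S⁻¹ψS⁻¹χ)⁻¹S⁻¹ψS⁻¹. Then B²·α = q²·α·B² and B²·γ = q²·γ·B² (i.e., q^β α = q² α q^β and q^β γ = q² γ q^β where q^β = B²). -/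
/-- `q^β α = q² α q^β` and `q^β γ = q² γ q^β`, where `q^β = B²`.
Here `S` plays the role of `q^{φ/2}`, `B = S + ψS⁻¹χ` plays the role of `q^{β/2}`,
`α = S⁻¹χS⁻¹(1 + ψS⁻¹χS⁻¹)⁻¹` and `γ = (1 + S⁻¹ψS⁻¹χ)⁻¹S⁻¹ψS⁻¹`. -/
theorem beta_commutation {A : Type*} [Ring A] [Algebra (RatFunc ℚ) A]
    (q : A) (hq : q = algebraMap (RatFunc ℚ) A (RatFunc.X : RatFunc ℚ))
    (S ψ χ : Aˣ)
    (hSψ : (S : A) * ψ = q * ((ψ : A) * S))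
    (hSχ : (S : A) * χ = q * ((χ : A) * S))
    (hψχ : (ψ : A) * χ = (χ : A) * ψ)
    (u₁ : Aˣ) (hu₁ : (u₁ : A) = 1 + (ψ : A) * (S⁻¹ : Aˣ) * χ * (S⁻¹ : Aˣ))
    (u₂ : Aˣ) (hu₂ : (u₂ : A) = 1 + ((S⁻¹ : Aˣ) : A) * ψ * (S⁻¹ : Aˣ) * χ)
    (B : Aˣ) (hB : (B : A) = (S : A) + (ψ : A) * (S⁻¹ : Aˣ) * χ)
    (α γ : A)
    (hα : α = ((S⁻¹ : Aˣ) : A) * χ * (S⁻¹ : Aˣ) * (u₁⁻¹ : Aˣ))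
    (hγ : γ = ((u₂⁻¹ : Aˣ) : A) * (S⁻¹ : Aˣ) * ψ * (S⁻¹ : Aˣ)) :
    ((B : A)) ^ 2 * α = q ^ 2 * (α * ((B : A)) ^ 2) ∧
    ((B : A)) ^ 2 * γ = q ^ 2 * (γ * ((B : A)) ^ 2) := by
  obtain ⟨Q, hQ⟩ : ∃ Q : Aˣ, (Q : A) = q :=
    ⟨Units.map (algebraMap (RatFunc ℚ) A).toMonoidHom (Units.mk0 RatFunc.X RatFunc.X_ne_zero),
      by simp [hq]⟩
  set s : A := (S : A) with hsdef
  set t : A := ((S⁻¹ : Aˣ) : A) with htdef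
  set p : A := (ψ : A) with hpdef
  set c : A := (χ : A) with hcdef
  set r : A := ((Q⁻¹ : Aˣ) : A) with hrdef
  have hqc : ∀ z : A, z * q = q * z := fun z => by
    rw [hq]; exact (Algebra.commutes _ z).symm
  have hqr' : q * r = 1 := by rw [← hQ]; exact Q.mul_inv
  have hrq' : r * q = 1 := by rw [← hQ]; exact Q.inv_mul
  have hqr : ∀ z : A, q * (r * z) = z := fun z => by
    rw [← mul_assoc, hqr', one_mul]
  have hrq : ∀ z : A, r * (q * z) = z := fun z => by
    rw [← mul_assoc, hrq', one_mul]
  have hrc : ∀ z : A, z * r = r * z := fun z => by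
    calc z * r = r * (q * (z * r)) := (hrq _).symm
      _ = r * (z * (q * r)) := by rw [← mul_assoc q z, ← hqc, mul_assoc]
      _ = r * z := by rw [hqr', mul_one]
  have hst : s * t = 1 := S.mul_inv
  have hts : t * s = 1 := S.inv_mul
  have cst : ∀ z : A, s * (t * z) = z := fun z => by rw [← mul_assoc, hst, one_mul]
  have cts : ∀ z : A, t * (s * z) = z := fun z => by rw [← mul_assoc, hts, one_mul]
  have mvq : ∀ z w : A, z * (q * w) = q * (z * w) := fun z w => by
    rw [← mul_assoc, hqc, mul_assoc]
  have mvr : ∀ z w : A, z * (r * w) = r * (z * w) := fun z w => by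
    rw [← mul_assoc, hrc, mul_assoc]
  have Rsp : ∀ z : A, s * (p * z) = q * (p * (s * z)) := fun z => by
    rw [← mul_assoc, hSψ, mul_assoc, mul_assoc]
  have Rsc : ∀ z : A, s * (c * z) = q * (c * (s * z)) := fun z => by
    rw [← mul_assoc, hSχ, mul_assoc, mul_assoc]
  have f4 : p * t = q * (t * p) := by
    have h1 : t * ((s * p) * t) = p * t := by
      rw [mul_assoc, cts]
    have h2 : t * ((q * (p * s)) * t) = q * (t * p) := by
      rw [mul_assoc q, mul_assoc p, hst, mul_one, mvq]
    rw [← h1, hSψ, h2]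
  have f5 : c * t = q * (t * c) := by
    have h1 : t * ((s * c) * t) = c * t := by
      rw [mul_assoc, cts]
    have h2 : t * ((q * (c * s)) * t) = q * (t * c) := by
      rw [mul_assoc q, mul_assoc c, hst, mul_one, mvq]
    rw [← h1, hSχ, h2]
  have Rtp' : t * p = r * (p * t) := by rw [f4, hrq]
  have Rtc' : t * c = r * (c * t) := by rw [f5, hrq]
  have Rtp : ∀ z : A, t * (p * z) = r * (p * (t * z)) := fun z => by
    rw [← mul_assoc, Rtp', mul_assoc, mul_assoc]
  have Rtc : ∀ z : A, t * (c * z) = r * (c * (t * z)) := fun z => by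
    rw [← mul_assoc, Rtc', mul_assoc, mul_assoc]
  have Rcp' : c * p = p * c := hψχ.symm
  have Rcp : ∀ z : A, c * (p * z) = p * (c * z) := fun z => by
    rw [← mul_assoc, Rcp', mul_assoc]
  have hB1 : (B : A) = (u₁ : A) * s := by
    rw [hB, hu₁]
    simp only [add_mul, one_mul, mul_assoc, hts, mul_one]
  have hB2 : (B : A) = s * (u₂ : A) := by
    rw [hB, hu₂]
    simp only [mul_add, mul_one, mul_assoc, cst]
  have ciu1 : ∀ z : A, ((u₁⁻¹ : Aˣ) : A) * ((u₁ : A) * z) = z := fun z => by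
    rw [← mul_assoc, u₁.inv_mul, one_mul]
  have ciu1' : ((u₁⁻¹ : Aˣ) : A) * (u₁ : A) = 1 := u₁.inv_mul
  have cu2 : ∀ z : A, (u₂ : A) * (((u₂⁻¹ : Aˣ) : A) * z) = z := fun z => by
    rw [← mul_assoc, u₂.mul_inv, one_mul]
  have cu2' : (u₂ : A) * ((u₂⁻¹ : Aˣ) : A) = 1 := u₂.mul_inv
  constructor
  · apply u₁.isUnit.mul_right_cancel
    rw [hα, hB1]
    simp only [pow_two, mul_assoc]
    simp only [ciu1, ciu1', cst, cts, mul_one, one_mul]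
    rw [hu₁]
    simp only [mul_add, add_mul, one_mul, mul_one, mul_assoc,
      Rsp, Rsc, Rtp, Rtc, Rcp, hSψ, hSχ, Rtp', Rtc', Rcp',
      cst, cts, hst, hts, hqr, hrq, hqr', hrq',
      mvq p, mvq c, mvq s, mvq t, hqc p, hqc c, hqc s, hqc t,
      mvr p, mvr c, mvr s, mvr t, hrc p, hrc c, hrc s, hrc t]
  · apply u₂.isUnit.mul_left_cancel
    rw [hγ, hB2]
    simp only [pow_two, mul_assoc]
    simp only [mvq ((u₂ : Aˣ) : A), cu2, cu2', cst, cts, mul_one, one_mul]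
    rw [hu₂]
    simp only [mul_add, add_mul, one_mul, mul_one, mul_assoc,
      Rsp, Rsc, Rtp, Rtc, Rcp, hSψ, hSχ, Rtp', Rtc', Rcp',
      cst, cts, hst, hts, hqr, hrq, hqr', hrq',
      mvq p, mvq c, mvq s, mvq t, hqc p, hqc c, hqc s, hqc t,
      mvr p, mvr c, mvr s, mvr t, hrc p, hrc c, hrc s, hrc t]
end

section
/- With the same setup (Sψ = qψS, Sχ = qχS, ψχ = χψ), the elements α = S⁻¹χS⁻¹(1 + ψS⁻¹χS⁻¹)⁻¹ and γ = (1 + S⁻¹ψS⁻¹χ)⁻¹S⁻¹ψS⁻¹ commute: α·γ = γ·α. -/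
/-- Abstract commutation lemma: if `q` is central, `p*s = q*(s*p)`, `c*s = q*(s*c)`,
`p*c = c*p`, and `u = 1 + p*c` is a unit, then `(s*c)*u⁻¹` and `s*(u⁻¹*p)` commute. -/
lemma alpha_gamma_aux {A : Type*} [Ring A] (q s p c : A) (u : Aˣ)
    (hc : ∀ a : A, q * a = a * q)
    (hps : p * s = q * (s * p))
    (hcs : c * s = q * (s * c))
    (hpc : p * c = c * p)
    (hu : (u : A) = 1 + p * c) :
    ((s * c) * ((u⁻¹ : Aˣ) : A)) * (s * (((u⁻¹ : Aˣ) : A) * p))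
      = (s * (((u⁻¹ : Aˣ) : A) * p)) * ((s * c) * ((u⁻¹ : Aˣ) : A)) := by
  have qmove : ∀ a b : A, a * (q * b) = q * (a * b) := fun a b => by
    rw [← mul_assoc, ← hc, mul_assoc]
  have huc : Commute (u : A) c := by
    show (u : A) * c = c * (u : A)
    rw [hu, add_mul, mul_add, one_mul, mul_one, ← mul_assoc c p c, ← hpc, mul_assoc]
  have hup : Commute (u : A) p := by
    show (u : A) * p = p * (u : A)
    rw [hu, add_mul, mul_add, one_mul, mul_one, mul_assoc p c p, ← hpc]
  set v : A := ((u⁻¹ : Aˣ) : A) with hv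
  have hvc : v * c = c * v := (huc.units_inv_left).eq
  have hvp : v * p = p * v := (hup.units_inv_left).eq
  have K : c * (v * (s * (v * p))) = v * (p * (s * (c * v))) := by
    have L : c * (v * (s * (v * p))) = q * (v * (s * (v * (c * p)))) := by
      calc c * (v * (s * (v * p)))
          = (c * v) * (s * (v * p)) := by rw [mul_assoc]
        _ = (v * c) * (s * (v * p)) := by rw [← hvc]
        _ = v * ((c * s) * (v * p)) := by rw [mul_assoc, ← mul_assoc c s]
        _ = v * ((q * (s * c)) * (v * p)) := by rw [hcs]
        _ = v * (q * ((s * c) * (v * p))) := by rw [mul_assoc]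
        _ = q * (v * ((s * c) * (v * p))) := by rw [qmove]
        _ = q * (v * (s * (c * (v * p)))) := by rw [mul_assoc s c]
        _ = q * (v * (s * ((c * v) * p))) := by rw [← mul_assoc c v]
        _ = q * (v * (s * ((v * c) * p))) := by rw [← hvc]
        _ = q * (v * (s * (v * (c * p)))) := by rw [mul_assoc v c]
    have R : v * (p * (s * (c * v))) = q * (v * (s * (v * (c * p)))) := by
      calc v * (p * (s * (c * v)))
          = v * ((p * s) * (c * v)) := by rw [mul_assoc p s]
        _ = v * ((q * (s * p)) * (c * v)) := by rw [hps]
        _ = v * (q * ((s * p) * (c * v))) := by rw [mul_assoc q]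
        _ = q * (v * ((s * p) * (c * v))) := by rw [qmove]
        _ = q * (v * (s * (p * (c * v)))) := by rw [mul_assoc s p]
        _ = q * (v * (s * ((p * c) * v))) := by rw [← mul_assoc p c]
        _ = q * (v * (s * ((c * p) * v))) := by rw [hpc]
        _ = q * (v * (s * (c * (p * v)))) := by rw [mul_assoc c p]
        _ = q * (v * (s * (c * (v * p)))) := by rw [hvp]
        _ = q * (v * (s * ((c * v) * p))) := by rw [← mul_assoc c v]
        _ = q * (v * (s * ((v * c) * p))) := by rw [← hvc]
        _ = q * (v * (s * (v * (c * p)))) := by rw [mul_assoc v c]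
    exact L.trans R.symm
  simp only [mul_assoc]
  rw [K]

/-- The elements `α = S⁻¹χS⁻¹(1 + ψS⁻¹χS⁻¹)⁻¹` and `γ = (1 + S⁻¹ψS⁻¹χ)⁻¹S⁻¹ψS⁻¹`
commute, given `Sψ = qψS`, `Sχ = qχS`, `ψχ = χψ`. -/
theorem alpha_gamma_commute {A : Type*} [Ring A] [Algebra (RatFunc ℚ) A]
    (q : A) (hq : q = algebraMap (RatFunc ℚ) A (RatFunc.X : RatFunc ℚ))
    (S ψ χ : Aˣ)
    (hSψ : (S : A) * ψ = q * ((ψ : A) * S))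
    (hSχ : (S : A) * χ = q * ((χ : A) * S))
    (hψχ : (ψ : A) * χ = (χ : A) * ψ)
    (u₁ : Aˣ) (hu₁ : (u₁ : A) = 1 + (ψ : A) * (S⁻¹ : Aˣ) * χ * (S⁻¹ : Aˣ))
    (u₂ : Aˣ) (hu₂ : (u₂ : A) = 1 + ((S⁻¹ : Aˣ) : A) * ψ * (S⁻¹ : Aˣ) * χ)
    (α γ : A)
    (hα : α = ((S⁻¹ : Aˣ) : A) * χ * (S⁻¹ : Aˣ) * (u₁⁻¹ : Aˣ))
    (hγ : γ = ((u₂⁻¹ : Aˣ) : A) * (S⁻¹ : Aˣ) * ψ * (S⁻¹ : Aˣ)) :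
    α * γ = γ * α := by
  have hc : ∀ a : A, q * a = a * q := fun a => by rw [hq]; exact Algebra.commutes _ a
  have qmove : ∀ a b : A, a * (q * b) = q * (a * b) := fun a b => by
    rw [← mul_assoc, ← hc, mul_assoc]
  set s : A := ((S⁻¹ : Aˣ) : A) with hs
  have hSs : (S : A) * s = 1 := S.mul_inv
  have hsS : s * (S : A) = 1 := S.inv_mul
  -- χ * s = q * (s * χ)
  have h1 : (χ : A) * s = q * (s * (χ : A)) := by
    calc (χ : A) * s = s * ((S : A) * χ) * s := by
          rw [← mul_assoc s, hsS, one_mul]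
      _ = s * (q * ((χ : A) * S)) * s := by rw [hSχ]
      _ = q * (s * ((χ : A) * S)) * s := by rw [qmove]
      _ = q * (s * ((χ : A) * ((S : A) * s))) := by
          rw [mul_assoc q, mul_assoc s, mul_assoc (χ : A)]
      _ = q * (s * (χ : A)) := by rw [hSs, mul_one]
  have h2 : (ψ : A) * s = q * (s * (ψ : A)) := by
    calc (ψ : A) * s = s * ((S : A) * ψ) * s := by
          rw [← mul_assoc s, hsS, one_mul]
      _ = s * (q * ((ψ : A) * S)) * s := by rw [hSψ]
      _ = q * (s * ((ψ : A) * S)) * s := by rw [qmove]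
      _ = q * (s * ((ψ : A) * ((S : A) * s))) := by
          rw [mul_assoc q, mul_assoc s, mul_assoc (ψ : A)]
      _ = q * (s * (ψ : A)) := by rw [hSs, mul_one]
  -- normal form for products (x*s)*(y*s)
  have key2 : ∀ x y : A, x * s = q * (s * x) → y * s = q * (s * y) →
      (x * s) * (y * s) = q * (q * (q * ((s * s) * (x * y)))) := by
    intro x y hx hy
    calc (x * s) * (y * s)
        = (x * s) * (q * (s * y)) := by rw [hy]
      _ = q * ((x * s) * (s * y)) := by rw [qmove]
      _ = q * ((q * (s * x)) * (s * y)) := by rw [hx]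
      _ = q * (q * ((s * x) * (s * y))) := by rw [mul_assoc q]
      _ = q * (q * (s * ((x * s) * y))) := by
          rw [mul_assoc s x, ← mul_assoc x s]
      _ = q * (q * (s * ((q * (s * x)) * y))) := by rw [hx]
      _ = q * (q * (s * (q * ((s * x) * y)))) := by rw [mul_assoc q (s*x) y]
      _ = q * (q * (q * (s * ((s * x) * y)))) := by rw [qmove s]
      _ = q * (q * (q * ((s * s) * (x * y)))) := by
          rw [mul_assoc s x y, ← mul_assoc s s]
  have hps : ((ψ : A) * s) * s = q * (s * ((ψ : A) * s)) := by
    conv_lhs => rw [h2]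
    rw [mul_assoc q, mul_assoc s]
  have hcs : ((χ : A) * s) * s = q * (s * ((χ : A) * s)) := by
    conv_lhs => rw [h1]
    rw [mul_assoc q, mul_assoc s]
  have hpc : ((ψ : A) * s) * ((χ : A) * s) = ((χ : A) * s) * ((ψ : A) * s) := by
    rw [key2 _ _ h2 h1, key2 _ _ h1 h2, hψχ]
  have hu : (u₁ : A) = 1 + ((ψ : A) * s) * ((χ : A) * s) := by
    rw [hu₁, mul_assoc ((ψ : A) * s)]
  -- u₂ = S⁻¹ * u₁ * S
  have hu2u : u₂ = S⁻¹ * u₁ * S := by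
    apply Units.ext
    show (u₂ : A) = s * (u₁ : A) * (S : A)
    rw [hu₂, hu₁, mul_add, mul_one, add_mul, hsS]
    simp only [mul_assoc]
    rw [hsS, mul_one]
  have hv2 : ((u₂⁻¹ : Aˣ) : A) = (s * ((u₁⁻¹ : Aˣ) : A)) * (S : A) := by
    rw [hu2u]
    simp only [mul_inv_rev, inv_inv, Units.val_mul]
    rw [mul_assoc]
  set v : A := ((u₁⁻¹ : Aˣ) : A) with hv
  have hα' : α = (s * ((χ : A) * s)) * v := by
    rw [hα, mul_assoc s (χ : A) s]
  have hγ' : γ = s * (v * ((ψ : A) * s)) := by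
    rw [hγ, hv2, mul_assoc (s * v), hSs, mul_one]
    simp only [mul_assoc]
  rw [hα', hγ']
  exact alpha_gamma_aux q s ((ψ : A) * s) ((χ : A) * s) u₁ hc hps hcs hpc hu
end

section
/- Let A be an associative algebra with invertible elements w^{1/2}, x^{1/2}, y^{1/2}, a^{1/2}, b^{1/2}, c^{1/2} (with q^{1/2} central, invertible), where x^{1/2}w^{1/2} = q^{1/2}w^{1/2}x^{1/2}, x^{1/2}y^{1/2} = q^{1/2}y^{1/2}x^{1/2}, w^{1/2}y^{1/2} = y^{1/2}w^{1/2}, and set w = (w^{1/2})², x = (x^{1/2})², y = (y^{1/2})². Suppose the four matrix-entry equations hold: (1) w^{1/2}x^{1/2}y^{1/2} + w^{1/2}x^{-1/2}y^{1/2} = a^{1/2}b^{1/2}c^{1/2}; (2) w^{1/2}x^{-1/2}y^{-1/2} = a^{1/2}b^{1/2}c^{-1/2}; (3) w^{-1/2}x^{-1/2}y^{1/2} = a^{-1/2}b^{1/2}c^{1/2}; (4) w^{-1/2}x^{-1/2}y^{-1/2} = a^{-1/2}b^{1/2}c^{-1/2} + a^{-1/2}b^{-1/2}c^{-1/2}, with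 a = (a^{1/2})², b = (b^{1/2})², c = (c^{1/2})², and suppose a^{1/2}, b^{1/2}, c^{1/2} satisfy b^{1/2}a^{1/2} = q^{-1/2}a^{1/2}b^{1/2}, b^{1/2}c^{1/2} = q^{-1/2}c^{1/2}b^{1/2}, a^{1/2}c^{1/2} = c^{1/2}a^{1/2}. Then a = w(1 + qx), c = y(1 + qx), and b = x⁻¹ (the quantum cluster mutation). -/
/-- **Quantum cluster mutation.** Given half-power variables `w^{1/2}, x^{1/2}, y^{1/2}`
and `a^{1/2}, b^{1/2}, c^{1/2}` with the stated commutation relations, the four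
matrix-entry equations comparing the two Gauss-type factorizations force
`a = w(1+qx)`, `c = y(1+qx)`, `b = x⁻¹`, where `q = (q^{1/2})²` and `w,x,y,a,b,c` are the
squares of the half-power variables.  Here `s = q^{1/2}` is the transcendental generator. -/
theorem quantum_cluster_mutation {A : Type*} [Ring A] [Algebra (RatFunc ℚ) A]
    (s : A) (hs : s = algebraMap (RatFunc ℚ) A (RatFunc.X : RatFunc ℚ))
    (w2 x2 y2 a2 b2 c2 : Aˣ)
    (hxw : (x2 : A) * w2 = s * ((w2 : A) * x2))
    (hxy : (x2 : A) * y2 = s * ((y2 : A) * x2))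
    (hwy : (w2 : A) * y2 = (y2 : A) * w2)
    (hba : (b2 : A) * a2 = algebraMap (RatFunc ℚ) A (RatFunc.X : RatFunc ℚ)⁻¹ * ((a2 : A) * b2))
    (hbc : (b2 : A) * c2 = algebraMap (RatFunc ℚ) A (RatFunc.X : RatFunc ℚ)⁻¹ * ((c2 : A) * b2))
    (hac : (a2 : A) * c2 = (c2 : A) * a2)
    (h1 : (w2 : A) * x2 * y2 + (w2 : A) * (x2⁻¹ : Aˣ) * y2 = (a2 : A) * b2 * c2)
    (h2 : (w2 : A) * (x2⁻¹ : Aˣ) * (y2⁻¹ : Aˣ) = (a2 : A) * b2 * (c2⁻¹ : Aˣ))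
    (h3 : ((w2⁻¹ : Aˣ) : A) * (x2⁻¹ : Aˣ) * y2 = ((a2⁻¹ : Aˣ) : A) * b2 * c2)
    (h4 : ((w2⁻¹ : Aˣ) : A) * (x2⁻¹ : Aˣ) * (y2⁻¹ : Aˣ)
        = ((a2⁻¹ : Aˣ) : A) * b2 * (c2⁻¹ : Aˣ) + ((a2⁻¹ : Aˣ) : A) * (b2⁻¹ : Aˣ) * (c2⁻¹ : Aˣ)) :
    ((a2 : A)) ^ 2 = ((w2 : A)) ^ 2 * (1 + s ^ 2 * ((x2 : A)) ^ 2) ∧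
    ((c2 : A)) ^ 2 = ((y2 : A)) ^ 2 * (1 + s ^ 2 * ((x2 : A)) ^ 2) ∧
    ((b2 : A)) ^ 2 = (((x2⁻¹ : Aˣ) : A)) ^ 2 := by
  have hXne : (RatFunc.X : RatFunc ℚ) ≠ 0 := RatFunc.X_ne_zero
  set t : A := algebraMap (RatFunc ℚ) A (RatFunc.X : RatFunc ℚ)⁻¹ with ht
  have hst : s * t = 1 := by rw [hs, ht, ← map_mul, mul_inv_cancel₀ hXne, map_one]
  have hts : t * s = 1 := by rw [ht, hs, ← map_mul, inv_mul_cancel₀ hXne, map_one]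
  have hsc : ∀ z : A, z * s = s * z := fun z => by
    rw [hs]; exact (Algebra.commutes _ z).symm
  have htc : ∀ z : A, z * t = t * z := fun z => by
    rw [ht]; exact (Algebra.commutes _ z).symm
  have hsz : ∀ (u : Aˣ) (z : A), (u : A) * (s * z) = s * ((u : A) * z) := fun u z => by
    rw [← mul_assoc, hsc, mul_assoc]
  have htz : ∀ (u : Aˣ) (z : A), (u : A) * (t * z) = t * ((u : A) * z) := fun u z => by
    rw [← mul_assoc, htc, mul_assoc]
  have hstz : ∀ z : A, s * (t * z) = z := fun z => by rw [← mul_assoc, hst, one_mul]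
  have htsz : ∀ z : A, t * (s * z) = z := fun z => by rw [← mul_assoc, hts, one_mul]
  have mk2 : ∀ (a b c d : A), a * b = c * d → ∀ z : A, a * (b * z) = c * (d * z) := by
    intro a b c d h z
    rw [← mul_assoc, h, mul_assoc]
  have mk3 : ∀ (a b r c d : A), a * b = r * (c * d) → ∀ z : A,
      a * (b * z) = r * (c * (d * z)) := by
    intro a b r c d h z
    rw [← mul_assoc, h, mul_assoc, mul_assoc]
  have conj : ∀ (r : A), (∀ z : A, z * r = r * z) → ∀ (u v : Aˣ),
      ((u : A) * v = r * ((v : A) * u)) → ((v : A) * ↑u⁻¹ = r * ((↑u⁻¹ : A) * v)) := by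
    intro r hr u v h
    calc (v : A) * ↑u⁻¹ = ↑u⁻¹ * ((u : A) * ((v : A) * ↑u⁻¹)) :=
          (Units.inv_mul_cancel_left u _).symm
      _ = ↑u⁻¹ * (((u : A) * v) * ↑u⁻¹) := by rw [mul_assoc (u : A)]
      _ = ↑u⁻¹ * ((r * ((v : A) * u)) * ↑u⁻¹) := by rw [h]
      _ = ↑u⁻¹ * (r * ((v : A) * ((u : A) * ↑u⁻¹))) := by
          rw [mul_assoc r, mul_assoc (v : A)]
      _ = ↑u⁻¹ * (r * (v : A)) := by rw [Units.mul_inv, mul_one]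
      _ = r * ((↑u⁻¹ : A) * v) := by rw [← mul_assoc, hr, mul_assoc]
  have conj1 : ∀ (u v : Aˣ), ((u : A) * v = (v : A) * u) →
      ((v : A) * ↑u⁻¹ = (↑u⁻¹ : A) * v) := by
    intro u v h
    have := conj 1 (by simp) u v (by rw [one_mul, h])
    simpa using this
  -- derived commutation rules
  have zXW := mk3 _ _ _ _ _ hxw
  have zXY := mk3 _ _ _ _ _ hxy
  have cWXi : (w2 : A) * ↑x2⁻¹ = s * ((↑x2⁻¹ : A) * w2) := conj s hsc x2 w2 hxw
  have rXiW : (↑x2⁻¹ : A) * w2 = t * ((w2 : A) * ↑x2⁻¹) := by rw [cWXi, htsz]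
  have zXiW := mk3 _ _ _ _ _ rXiW
  have cYXi : (y2 : A) * ↑x2⁻¹ = s * ((↑x2⁻¹ : A) * y2) := conj s hsc x2 y2 hxy
  have cXiYi : (↑x2⁻¹ : A) * ↑y2⁻¹ = s * ((↑y2⁻¹ : A) * ↑x2⁻¹) := conj s hsc y2 x2⁻¹ cYXi
  have rYiXi : (↑y2⁻¹ : A) * ↑x2⁻¹ = t * ((↑x2⁻¹ : A) * ↑y2⁻¹) := by rw [cXiYi, htsz]
  have zYiXi := mk3 _ _ _ _ _ rYiXi
  have rYiW : (↑y2⁻¹ : A) * w2 = (w2 : A) * ↑y2⁻¹ := (conj1 y2 w2 hwy.symm).symm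
  have zYiW := mk2 _ _ _ _ rYiW
  have hCB : (c2 : A) * b2 = s * ((b2 : A) * c2) := by rw [hbc, hstz]
  have cBCi : (b2 : A) * ↑c2⁻¹ = s * ((↑c2⁻¹ : A) * b2) := conj s hsc c2 b2 hCB
  have rCiB : (↑c2⁻¹ : A) * b2 = t * ((b2 : A) * ↑c2⁻¹) := by rw [cBCi, htsz]
  have zCiB := mk3 _ _ _ _ _ rCiB
  have rCiA : (↑c2⁻¹ : A) * a2 = (a2 : A) * ↑c2⁻¹ := (conj1 c2 a2 hac.symm).symm
  have zCiA := mk2 _ _ _ _ rCiA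
  have zBA := mk3 _ _ _ _ _ hba
  -- unit-level versions of h2 and h3 and their inverses
  have u2 : w2 * x2⁻¹ * y2⁻¹ = a2 * b2 * c2⁻¹ := by
    apply Units.ext
    simpa only [Units.val_mul] using h2
  have e2inv : (y2 : A) * ((x2 : A) * (↑w2⁻¹ : A)) = (c2 : A) * ((↑b2⁻¹ : A) * (↑a2⁻¹ : A)) := by
    have h' : (w2 * x2⁻¹ * y2⁻¹)⁻¹ = (a2 * b2 * c2⁻¹)⁻¹ := by rw [u2]
    have := congrArg (fun u : Aˣ => (u : A)) h'
    simpa only [mul_inv_rev, inv_inv, Units.val_mul, mul_assoc] using this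
  have u3 : w2⁻¹ * x2⁻¹ * y2 = a2⁻¹ * b2 * c2 := by
    apply Units.ext
    simpa only [Units.val_mul] using h3
  have e3inv : (↑y2⁻¹ : A) * ((x2 : A) * (w2 : A)) = (↑c2⁻¹ : A) * ((↑b2⁻¹ : A) * (a2 : A)) := by
    have h' : (w2⁻¹ * x2⁻¹ * y2)⁻¹ = (a2⁻¹ * b2 * c2)⁻¹ := by rw [u3]
    have := congrArg (fun u : Aˣ => (u : A)) h'
    simpa only [mul_inv_rev, inv_inv, Units.val_mul, mul_assoc] using this
  -- Part (a)
  have goalA : ((a2 : A)) ^ 2 = ((w2 : A)) ^ 2 * (1 + s ^ 2 * ((x2 : A)) ^ 2) := by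
    calc ((a2 : A)) ^ 2
        = ((a2 : A) * b2 * c2) * ((↑c2⁻¹ : A) * ((↑b2⁻¹ : A) * (a2 : A))) := by
          rw [pow_two]
          simp only [mul_assoc, Units.mul_inv_cancel_left]
      _ = ((w2 : A) * x2 * y2 + (w2 : A) * ↑x2⁻¹ * y2) * ((↑y2⁻¹ : A) * ((x2 : A) * (w2 : A))) := by
          rw [← h1, ← e3inv]
      _ = ((w2 : A)) ^ 2 * (1 + s ^ 2 * ((x2 : A)) ^ 2) := by
          simp only [pow_two, add_mul, mul_add, mul_one, mul_assoc,
            Units.mul_inv_cancel_left, Units.inv_mul_cancel_left, hxw, zXW, zXiW, hsz, htz,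
            hstz, htsz, Units.inv_mul, Units.mul_inv, add_comm]
  -- Part (c)
  have goalC : ((c2 : A)) ^ 2 = ((y2 : A)) ^ 2 * (1 + s ^ 2 * ((x2 : A)) ^ 2) := by
    calc ((c2 : A)) ^ 2
        = ((c2 : A) * ((↑b2⁻¹ : A) * (↑a2⁻¹ : A))) * ((a2 : A) * b2 * c2) := by
          rw [pow_two]
          simp only [mul_assoc, Units.inv_mul_cancel_left]
      _ = ((y2 : A) * ((x2 : A) * (↑w2⁻¹ : A))) * ((w2 : A) * x2 * y2 + (w2 : A) * ↑x2⁻¹ * y2) := by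
          rw [← h1, ← e2inv]
      _ = ((y2 : A)) ^ 2 * (1 + s ^ 2 * ((x2 : A)) ^ 2) := by
          simp only [pow_two, add_mul, mul_add, mul_one, mul_assoc,
            Units.mul_inv_cancel_left, Units.inv_mul_cancel_left, hxy, zXY, hsz, htz,
            hstz, htsz, Units.inv_mul, Units.mul_inv, add_comm]
  -- Part (b)
  have cancel2 : ∀ z1 z2 : A, t * (t * z1) = t * (t * z2) → z1 = z2 := by
    intro z1 z2 h
    have h' := congrArg (fun w => s * (s * w)) h
    simpa only [hstz] using h'
  have h2' : (a2 : A) * ((b2 : A) * (↑c2⁻¹ : A)) =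
      (w2 : A) * ((↑x2⁻¹ : A) * (↑y2⁻¹ : A)) := by
    have := h2.symm
    simpa only [mul_assoc] using this
  have hBCi : (b2 : A) * (↑c2⁻¹ : A) =
      ↑a2⁻¹ * ((w2 : A) * ((↑x2⁻¹ : A) * (↑y2⁻¹ : A))) := by
    rw [← h2', Units.inv_mul_cancel_left]
  have lhsEq : ((↑a2⁻¹ : A) * ((b2 : A) * ↑c2⁻¹)) * ((a2 : A) * ((b2 : A) * ↑c2⁻¹)) =
      t * (t * ((b2 : A) * ((b2 : A) * ((↑c2⁻¹ : A) * (↑c2⁻¹ : A))))) := by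
    simp only [mul_assoc, zCiA, zBA, zCiB, htz, Units.inv_mul_cancel_left]
  have rhsEq : ((↑a2⁻¹ : A) * ((b2 : A) * ↑c2⁻¹)) * ((a2 : A) * ((b2 : A) * ↑c2⁻¹)) =
      t * (t * ((↑a2⁻¹ : A) * ((↑a2⁻¹ : A) * ((w2 : A) * ((w2 : A) *
        ((↑x2⁻¹ : A) * ((↑x2⁻¹ : A) * ((↑y2⁻¹ : A) * (↑y2⁻¹ : A))))))))) := by
    rw [h2', hBCi]
    simp only [mul_assoc, zYiW, zXiW, zYiXi, htz]
  have key : (b2 : A) * ((b2 : A) * ((↑c2⁻¹ : A) * (↑c2⁻¹ : A))) =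
      (↑a2⁻¹ : A) * ((↑a2⁻¹ : A) * ((w2 : A) * ((w2 : A) *
        ((↑x2⁻¹ : A) * ((↑x2⁻¹ : A) * ((↑y2⁻¹ : A) * (↑y2⁻¹ : A))))))) :=
    cancel2 _ _ (lhsEq.symm.trans rhsEq)
  have hCC : (c2 : A) * (c2 : A) =
      (y2 : A) * ((y2 : A) * (1 + s * (s * ((x2 : A) * (x2 : A))))) := by
    have h := goalC
    simp only [pow_two, mul_assoc] at h
    exact h
  have hAA : (a2 : A) * (a2 : A) =
      (w2 : A) * ((w2 : A) * (1 + s * (s * ((x2 : A) * (x2 : A))))) := by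
    have h := goalA
    simp only [pow_two, mul_assoc] at h
    exact h
  have hswap : (↑x2⁻¹ : A) * ((↑x2⁻¹ : A) * (1 + s * (s * ((x2 : A) * (x2 : A))))) =
      (1 + s * (s * ((x2 : A) * (x2 : A)))) * ((↑x2⁻¹ : A) * (↑x2⁻¹ : A)) := by
    simp only [mul_add, add_mul, one_mul, mul_one, mul_assoc, hsz,
      Units.inv_mul_cancel_left, Units.mul_inv_cancel_left, Units.inv_mul, Units.mul_inv]
  have goalB : ((b2 : A)) ^ 2 = (((x2⁻¹ : Aˣ) : A)) ^ 2 := by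
    calc ((b2 : A)) ^ 2
        = ((b2 : A) * ((b2 : A) * ((↑c2⁻¹ : A) * (↑c2⁻¹ : A)))) * ((c2 : A) * (c2 : A)) := by
          rw [pow_two]
          simp only [mul_assoc, Units.inv_mul_cancel_left, Units.inv_mul, mul_one]
      _ = ((↑a2⁻¹ : A) * ((↑a2⁻¹ : A) * ((w2 : A) * ((w2 : A) *
            ((↑x2⁻¹ : A) * ((↑x2⁻¹ : A) * ((↑y2⁻¹ : A) * (↑y2⁻¹ : A)))))))) *
            ((c2 : A) * (c2 : A)) := by rw [key]
      _ = (((x2⁻¹ : Aˣ) : A)) ^ 2 := by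
          rw [pow_two]
          simp only [mul_assoc]
          rw [hCC]
          simp only [Units.inv_mul_cancel_left]
          rw [hswap]
          rw [show (w2 : A) * ((w2 : A) * ((1 + s * (s * ((x2 : A) * (x2 : A)))) *
              ((↑x2⁻¹ : A) * (↑x2⁻¹ : A)))) =
              ((w2 : A) * ((w2 : A) * (1 + s * (s * ((x2 : A) * (x2 : A)))))) *
              ((↑x2⁻¹ : A) * (↑x2⁻¹ : A)) from by rw [mul_assoc, mul_assoc]]
          rw [← hAA]
          simp only [mul_assoc, Units.inv_mul_cancel_left]
  exact ⟨goalA, goalC, goalB⟩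
end

section
/- For integers m ≥ n ≥ 1 and real x > 0, the hypergeometric identity holds: x^{-m} · Γ(m)/(Γ(n)Γ(m−n+1)) · ₂F₁(m, m+1; m−n+1; −1/x) = (−1)^{n+1} n x / (1+x)^{m+n} · ₂F₁(1−m, 1−n; 2; −x). (Note the right-hand side involves a terminating hypergeometric series since 1−m, 1−n are nonpositive integers.) -/
noncomputable section

/-- Rising factorial (Pochhammer symbol) `(a)_j = a(a+1)⋯(a+j-1)` for a real `a`. -/
def poch (a : ℝ) (j : ℕ) : ℝ := ∏ i ∈ Finset.range j, (a + i)

open Finset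

lemma poch_succ (a : ℝ) (j : ℕ) : poch a (j+1) = poch a j * (a + j) :=
  Finset.prod_range_succ _ _

lemma poch_natCast (M : ℕ) : ∀ j, poch (M:ℝ) j = (M.ascFactorial j : ℝ)
  | 0 => by simp [poch]
  | j+1 => by
    rw [poch_succ, poch_natCast M j, Nat.ascFactorial_succ]
    push_cast; ring

lemma poch_neg_natCast (N : ℕ) : ∀ i, poch (-(N:ℝ)) i = (-1)^i * (N.descFactorial i : ℝ)
  | 0 => by simp [poch]
  | i+1 => by
    rw [poch_succ, poch_neg_natCast N i, Nat.descFactorial_succ]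
    rcases le_or_gt i N with h | h
    · rw [Nat.cast_mul, Nat.cast_sub h]; ring
    · rw [Nat.descFactorial_eq_zero_iff_lt.mpr h]
      push_cast; ring

lemma ascFactorial_add (M i : ℕ) :
    ∀ k, M.ascFactorial (i + k) = M.ascFactorial i * (M + i).ascFactorial k
  | 0 => by simp
  | k+1 => by
    rw [← Nat.add_assoc, Nat.ascFactorial_succ, ascFactorial_add M i k, Nat.ascFactorial_succ]
    ring

lemma two_ascFactorial (k : ℕ) : (2:ℕ).ascFactorial k = (k+1).factorial := by
  have h := Nat.factorial_mul_ascFactorial 1 k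
  simpa [Nat.add_comm] using h

lemma vand (m n j : ℕ) (hn : 1 ≤ n) (hm : n ≤ m) :
    (m.ascFactorial j : ℕ) = ∑ i ∈ range n,
      (if i ≤ j then j.choose i * (n-1).descFactorial i * ((m-n+1+i).ascFactorial (j-i)) else 0) := by
  set F : ℕ → ℕ := fun i =>
    if i ≤ j then j.choose i * (n-1).descFactorial i * ((m-n+1+i).ascFactorial (j-i)) else 0 with hF
  have hzero : ∀ i, n ≤ i → F i = 0 := by
    intro i hi
    simp only [hF, Nat.descFactorial_eq_zero_iff_lt.mpr (show n-1 < i by omega)]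
    simp
  have h1 : ∑ i ∈ range n, F i = ∑ i ∈ range (n+j+1), F i := by
    apply Finset.sum_subset (Finset.range_subset_range.mpr (by omega))
    intro i _ hi
    exact hzero i (by simpa using hi)
  have h2 : ∑ i ∈ range (j+1), F i = ∑ i ∈ range (n+j+1), F i := by
    apply Finset.sum_subset (Finset.range_subset_range.mpr (by omega))
    intro i _ hi
    simp only [hF, if_neg (show ¬ i ≤ j by simpa using hi)]
  rw [h1, ← h2]
  have asc_eq : m.ascFactorial j = j.factorial * (m-1+j).choose j := by
    have := Nat.ascFactorial_eq_factorial_mul_choose (m-1) j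
    rwa [show m - 1 + 1 = m by omega] at this
  have vdm := Nat.add_choose_eq (n-1) (m-n+j) j
  rw [Finset.Nat.sum_antidiagonal_eq_sum_range_succ_mk] at vdm
  rw [show (n-1) + (m-n+j) = m-1+j by omega] at vdm
  rw [asc_eq, vdm, Finset.mul_sum]
  apply Finset.sum_congr rfl
  intro p hp
  have hpj : p ≤ j := by simpa [Nat.lt_succ_iff] using hp
  rw [hF]
  simp only [if_pos hpj]
  rw [Nat.descFactorial_eq_factorial_mul_choose,
      show (m-n+1+p).ascFactorial (j-p) = (m-n+j).descFactorial (j-p) by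
        rw [← Nat.add_descFactorial_eq_ascFactorial' (m-n+1+p) (j-p),
            show m-n+1+p + (j-p) - 1 = m-n+j by omega],
      Nat.descFactorial_eq_factorial_mul_choose,
      ← Nat.choose_mul_factorial_mul_factorial hpj]
  ring

lemma desc_diff (M s : ℕ) :
    ((M+1).descFactorial (s+1) : ℤ) = (M.descFactorial (s+1) : ℤ) + (s+1) * M.descFactorial s := by
  rcases le_or_gt s M with h | h
  · rw [Nat.succ_descFactorial_succ, Nat.descFactorial_succ]
    push_cast [h]
    ring
  · rw [Nat.descFactorial_eq_zero_iff_lt.mpr h,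
        Nat.descFactorial_eq_zero_iff_lt.mpr (show M < s+1 by omega),
        Nat.succ_descFactorial_succ, Nat.descFactorial_eq_zero_iff_lt.mpr h]
    simp

lemma alt_sum (n : ℕ) : ∀ (J M : ℕ),
    ∑ i ∈ range (J+1), (-1:ℤ)^i * (J.choose i) * ((M+i).descFactorial n)
      = (-1)^J * (n.descFactorial J) * (M.descFactorial (n-J))
  | 0, M => by simp
  | J+1, M => by
    have pascal : ∀ i : ℕ, (((J+1).choose (i+1) : ℕ) : ℤ) = (J.choose i : ℤ) + (J.choose (i+1) : ℤ) := by
      intro i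
      rw [Nat.choose_succ_succ]
      push_cast; ring
    rw [Finset.sum_range_succ' _ (J+1)]
    have step : ∀ i ∈ range (J+1),
        (-1:ℤ)^(i+1) * ((J+1).choose (i+1)) * ((M+(i+1)).descFactorial n)
        = ((-1:ℤ)^(i+1) * (J.choose (i+1)) * ((M+(i+1)).descFactorial n))
          - ((-1:ℤ)^i * (J.choose i) * ((M+1+i).descFactorial n)) := by
      intro i _
      rw [pascal i, show M+(i+1) = M+1+i by ring]
      ring
    rw [Finset.sum_congr rfl step, Finset.sum_sub_distrib]
    have e2 : (∑ i ∈ range (J+1), (-1:ℤ)^(i+1) * (J.choose (i+1)) * ((M+(i+1)).descFactorial n))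
        + (-1:ℤ)^0 * (((J+1).choose 0 : ℕ) : ℤ) * ((M+0).descFactorial n)
        = ∑ i ∈ range (J+1), (-1:ℤ)^i * (J.choose i) * ((M+i).descFactorial n) := by
      have h0 : (((J+1).choose 0 : ℕ) : ℤ) = ((J.choose 0 : ℕ) : ℤ) := by simp
      rw [h0, ← Finset.sum_range_succ'
        (fun i => (-1:ℤ)^i * (J.choose i) * ((M+i).descFactorial n)) (J+1),
        Finset.sum_range_succ]
      simp
    rw [sub_eq_add_neg, add_right_comm, ← sub_eq_add_neg, e2, alt_sum n J M, alt_sum n J (M+1)]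
    rcases lt_or_ge J n with h | h
    · obtain ⟨s, hs⟩ : ∃ s, n - J = s + 1 := ⟨n - J - 1, by omega⟩
      have hs' : n - (J+1) = s := by omega
      rw [hs, hs', desc_diff M s]
      have hdesc : ((n.descFactorial (J+1) : ℕ) : ℤ) = (s+1) * (n.descFactorial J : ℕ) := by
        rw [Nat.descFactorial_succ]
        push_cast [show n - J = s+1 from hs]
        ring
      rw [hdesc]
      ring
    · rw [show n - J = 0 by omega, show n - (J+1) = 0 by omega,
        Nat.descFactorial_eq_zero_iff_lt.mpr (show n < J+1 by omega)]
      simp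

lemma cast_descFactorial {t s : ℕ} (h : s ≤ t) :
    (t.descFactorial s : ℝ) = (t.factorial : ℝ) / ((t - s).factorial : ℝ) := by
  rw [eq_div_iff (by exact_mod_cast (t-s).factorial_ne_zero)]
  exact_mod_cast congrArg (Nat.cast (R := ℝ)) ((Nat.mul_comm _ _).trans (Nat.factorial_mul_descFactorial h))

lemma cast_ascFactorial (M k : ℕ) :
    ((M+1).ascFactorial k : ℝ) = ((M+k).factorial : ℝ) / (M.factorial : ℝ) := by
  rw [eq_div_iff (by exact_mod_cast M.factorial_ne_zero)]
  exact_mod_cast congrArg (Nat.cast (R := ℝ)) ((Nat.mul_comm _ _).trans (Nat.factorial_mul_ascFactorial M k))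

/-- The Gauss hypergeometric series
`₂F₁(a, b; c; z) = Σ_{j ≥ 0} (a)_j (b)_j / ((c)_j j!) zʲ`
(interpreted as the sum of the series; when the series terminates this is a finite sum). -/
def hypGeom (a b c z : ℝ) : ℝ :=
  ∑' j : ℕ, poch a j * poch b j / (poch c j * (j.factorial : ℝ)) * z ^ j

def Pr (m n i : ℕ) : ℝ :=
  (((n-1).descFactorial i : ℝ) * ((m+1).ascFactorial i : ℝ)) /
    (((m-n+1).ascFactorial i : ℝ) * (i.factorial : ℝ))

def Br (m n : ℕ) : ℝ :=
  ((m-1).factorial : ℝ) / (((n-1).factorial : ℝ) * ((m-n).factorial : ℝ))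

lemma key1 (m n : ℕ) (hn : 1 ≤ n) (hm : n ≤ m) {z : ℝ} (hz : |z| < 1) :
    hypGeom (m:ℝ) ((m:ℝ)+1) ((m:ℝ)-(n:ℝ)+1) z
      = ∑ i ∈ Finset.range n, Pr m n i * z^i * ((1-z)^(m+1+i))⁻¹ := by
  have hb : ((m:ℝ) + 1) = ((m+1 : ℕ) : ℝ) := by push_cast; ring
  have hc : ((m:ℝ) - (n:ℝ) + 1) = ((m-n+1 : ℕ) : ℝ) := by
    push_cast [Nat.cast_sub hm]; ring
  set h : ℕ → ℕ → ℝ := fun i j =>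
    if i ≤ j then Pr m n i * (((m+1+i).ascFactorial (j-i) : ℝ)/((j-i).factorial : ℝ)) * z^j
    else 0 with hdef
  have core : ∀ j : ℕ, ((m.ascFactorial j : ℝ) * ((m+1).ascFactorial j : ℝ)) /
      (((m-n+1).ascFactorial j : ℝ) * (j.factorial : ℝ))
      = ∑ i ∈ range n, (if i ≤ j then
          Pr m n i * (((m+1+i).ascFactorial (j-i) : ℝ)/((j-i).factorial:ℝ)) else 0) := by
    intro j
    have hD : (((m-n+1).ascFactorial j : ℝ) * (j.factorial : ℝ)) ≠ 0 := by
      have h1 : 0 < (m-n+1).ascFactorial j := Nat.ascFactorial_pos (m-n) j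
      have h2 : 0 < j.factorial := j.factorial_pos
      exact mul_ne_zero (by exact_mod_cast h1.ne') (by exact_mod_cast h2.ne')
    rw [div_eq_iff hD, Finset.sum_mul]
    have sumeq : ∀ i ∈ range n,
        (if i ≤ j then Pr m n i * (((m+1+i).ascFactorial (j-i) : ℝ)/((j-i).factorial:ℝ)) else 0)
          * (((m-n+1).ascFactorial j : ℝ) * (j.factorial : ℝ))
        = (((if i ≤ j then j.choose i * (n-1).descFactorial i *
            ((m-n+1+i).ascFactorial (j-i)) else 0 : ℕ)) : ℝ) * ((m+1).ascFactorial j : ℝ) := by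
      intro i _
      rcases le_or_gt i j with hij | hij
      · rw [if_pos hij, if_pos hij]
        have E1 : (j.factorial : ℝ) = (j.choose i : ℝ) * (i.factorial : ℝ) * ((j-i).factorial : ℝ) := by
          exact_mod_cast (congrArg (Nat.cast (R := ℝ))
            (Nat.choose_mul_factorial_mul_factorial hij)).symm
        have E2 : ((m-n+1).ascFactorial j : ℝ)
            = ((m-n+1).ascFactorial i : ℝ) * ((m-n+1+i).ascFactorial (j-i) : ℝ) := by
          have h3 := ascFactorial_add (m-n+1) i (j-i)
          rw [show i + (j-i) = j by omega] at h3
          exact_mod_cast congrArg (Nat.cast (R := ℝ)) h3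
        have E3 : ((m+1).ascFactorial j : ℝ)
            = ((m+1).ascFactorial i : ℝ) * ((m+1+i).ascFactorial (j-i) : ℝ) := by
          have h3 := ascFactorial_add (m+1) i (j-i)
          rw [show i + (j-i) = j by omega] at h3
          exact_mod_cast congrArg (Nat.cast (R := ℝ)) h3
        have n1 : ((m-n+1).ascFactorial i : ℝ) ≠ 0 := by
          exact_mod_cast (Nat.ascFactorial_pos (m-n) i).ne'
        have n2 : (i.factorial : ℝ) ≠ 0 := by exact_mod_cast i.factorial_pos.ne'
        have n3 : ((j-i).factorial : ℝ) ≠ 0 := by exact_mod_cast (j-i).factorial_pos.ne'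
        simp only [Pr]
        rw [E1, E2, E3]
        push_cast
        field_simp
      · rw [if_neg (by omega), if_neg (by omega)]
        simp
    rw [Finset.sum_congr rfl sumeq, ← Finset.sum_mul, ← Nat.cast_sum, ← vand m n j hn hm]
  have expand : hypGeom (m:ℝ) ((m:ℝ)+1) ((m:ℝ)-(n:ℝ)+1) z = ∑' j, ∑ i ∈ range n, h i j := by
    apply tsum_congr
    intro j
    rw [hb, hc, poch_natCast, poch_natCast, poch_natCast, core j, Finset.sum_mul]
    exact Finset.sum_congr rfl (fun i _ => by simp only [hdef]; rw [ite_mul, zero_mul])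
  have hsum : ∀ i ∈ range n, HasSum (h i) (Pr m n i * z^i * ((1-z)^(m+1+i))⁻¹) := by
    intro i _
    have hz' : ‖z‖ < 1 := by rwa [Real.norm_eq_abs]
    have H0 := hasSum_choose_mul_geometric_of_norm_lt_one (𝕜 := ℝ) (m+i) hz'
    have H1 := H0.mul_left (Pr m n i * z^i)
    have heq : (fun t => h i (t + i))
        = fun t => Pr m n i * z^i * (((t + (m+i)).choose (m+i) : ℝ) * z^t) := by
      funext t
      simp only [hdef]
      rw [if_pos (by omega), show t + i - i = t by omega]
      have hcc : ((m+1+i).ascFactorial t : ℝ) = ((t + (m+i)).choose (m+i) : ℝ) * (t.factorial : ℝ) := by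
        have h1 : (m+i+1).ascFactorial t = t.factorial * ((m+i)+t).choose t :=
          Nat.ascFactorial_eq_factorial_mul_choose (m+i) t
        have h2 : ((m+i)+t).choose t = (t + (m+i)).choose (m+i) := by
          conv_lhs => rw [← Nat.choose_symm (Nat.le_add_left t (m+i))]
          rw [show (m+i)+t - t = m+i by omega, show (m+i)+t = t+(m+i) by omega]
        rw [show m+1+i = m+i+1 by omega, h1, h2]
        push_cast; ring
      rw [hcc]
      have n3 : (t.factorial : ℝ) ≠ 0 := by exact_mod_cast t.factorial_pos.ne'
      rw [pow_add]
      field_simp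
    rw [← heq] at H1
    have H2 := (hasSum_nat_add_iff (f := h i) i).mp H1
    have hzero : ∑ t ∈ range i, h i t = 0 :=
      Finset.sum_eq_zero (fun t ht => by
        simp only [hdef]
        rw [if_neg (by simp only [Finset.mem_range] at ht; omega)])
    rw [hzero, add_zero] at H2
    have : (1:ℝ)/(1-z)^(m+i+1) = ((1-z)^(m+1+i))⁻¹ := by
      rw [one_div, show m+i+1 = m+1+i by omega]
    rw [this] at H2
    exact H2
  rw [expand, Summable.tsum_finsetSum (fun i hi => (hsum i hi).summable)]
  exact Finset.sum_congr rfl (fun i hi => (hsum i hi).tsum_eq)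

lemma key2 (m n : ℕ) (hn : 1 ≤ n) (hm : n ≤ m) (y : ℝ) :
    hypGeom (1-(m:ℝ)) (1-(n:ℝ)) 2 y
      = ∑ k ∈ Finset.range n, (((m-1).descFactorial k : ℝ) * ((n-1).descFactorial k : ℝ)) /
          (((k+1).factorial : ℝ) * (k.factorial : ℝ)) * y^k := by
  have hm1 : (1 - (m:ℝ)) = -(((m-1 : ℕ)) : ℝ) := by
    push_cast [Nat.cast_sub (show 1 ≤ m by omega)]; ring
  have hn1 : (1 - (n:ℝ)) = -(((n-1 : ℕ)) : ℝ) := by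
    push_cast [Nat.cast_sub hn]; ring
  have h2 : (2:ℝ) = ((2:ℕ):ℝ) := by norm_num
  simp only [hypGeom, hm1, hn1]
  have h0 : ∀ k ∉ Finset.range n,
      poch (-((m-1:ℕ):ℝ)) k * poch (-((n-1:ℕ):ℝ)) k / (poch 2 k * (k.factorial:ℝ)) * y^k = 0 := by
    intro k hk
    have hk' : n ≤ k := by simpa using hk
    rw [poch_neg_natCast, poch_neg_natCast,
        Nat.descFactorial_eq_zero_iff_lt.mpr (show n-1 < k by omega)]
    simp
  rw [tsum_eq_sum h0]
  apply Finset.sum_congr rfl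
  intro k _
  rw [poch_neg_natCast, poch_neg_natCast, h2, poch_natCast, two_ascFactorial]
  have e : ((-1:ℝ)^k * ((m-1).descFactorial k : ℝ)) * ((-1:ℝ)^k * ((n-1).descFactorial k : ℝ))
      = ((m-1).descFactorial k : ℝ) * ((n-1).descFactorial k : ℝ) := by
    rw [mul_mul_mul_comm, ← mul_pow]; norm_num
  rw [e]

lemma pk (m n k : ℕ) (hn : 1 ≤ n) (hm : n ≤ m) (hk : k < n) :
    ∑ i ∈ Finset.range n, Br m n * Pr m n i * (-1:ℝ)^i * ((n-1-i).choose k : ℝ)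
      = (-1:ℝ)^(n+1+k) * n *
        ((((m-1).descFactorial k : ℝ) * ((n-1).descFactorial k : ℝ)) /
          (((k+1).factorial : ℝ) * (k.factorial : ℝ))) := by
  have nz : ∀ t : ℕ, (t.factorial : ℝ) ≠ 0 := fun t => by exact_mod_cast t.factorial_pos.ne'
  set J := n - 1 - k with hJ
  set c : ℝ := ((m-1).factorial : ℝ) /
      ((m.factorial : ℝ) * (k.factorial : ℝ) * ((n-1-k).factorial : ℝ)) with hc
  have step1 : ∀ i ∈ Finset.range n,
      Br m n * Pr m n i * (-1:ℝ)^i * ((n-1-i).choose k : ℝ)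
      = c * ((-1:ℝ)^i * (J.choose i : ℝ) * ((m+i).descFactorial n : ℝ)) := by
    intro i hi
    have hin : i ≤ n-1 := by simp only [Finset.mem_range] at hi; omega
    rcases le_or_gt i (n-1-k) with hik | hik
    · have c1 : ((n-1).descFactorial i : ℝ) = ((n-1).factorial:ℝ)/((n-1-i).factorial:ℝ) :=
        cast_descFactorial hin
      have c2 : ((m+1).ascFactorial i : ℝ) = ((m+i).factorial:ℝ)/((m).factorial:ℝ) :=
        cast_ascFactorial m i
      have c3 : ((m-n+1).ascFactorial i : ℝ) = ((m-n+i).factorial:ℝ)/((m-n).factorial:ℝ) :=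
        cast_ascFactorial (m-n) i
      have c4 : ((n-1-i).choose k : ℝ)
          = ((n-1-i).factorial:ℝ)/((k.factorial:ℝ) * ((n-1-i-k).factorial:ℝ)) :=
        Nat.cast_choose ℝ (show k ≤ n-1-i by omega)
      have c5 : ((J.choose i : ℕ) : ℝ)
          = ((n-1-k).factorial:ℝ)/((i.factorial:ℝ) * ((n-1-k-i).factorial:ℝ)) := by
        rw [hJ, Nat.cast_choose ℝ (show i ≤ n-1-k by omega)]
      have c6 : ((m+i).descFactorial n : ℝ) = ((m+i).factorial:ℝ)/((m-n+i).factorial:ℝ) := by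
        rw [cast_descFactorial (show n ≤ m+i by omega), show m+i-n = m-n+i by omega]
      have c7 : (n-1-i-k) = (n-1-k-i) := by omega
      simp only [Br, Pr]
      rw [c1, c2, c3, c4, c5, c6, c7, hc]
      have z1 := nz (n-1-i); have z2 := nz m; have z3 := nz (m-n); have z4 := nz k
      have z5 := nz (n-1-k-i); have z6 := nz i; have z7 := nz (m-n+i); have z8 := nz (n-1-k)
      have z9 := nz (n-1); have z10 := nz (m-1); have z11 := nz (m+i)
      field_simp
    · rw [Nat.choose_eq_zero_of_lt (show n-1-i < k by omega),
          Nat.choose_eq_zero_of_lt (show J < i by omega)]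
      simp
  rw [Finset.sum_congr rfl step1, ← Finset.mul_sum]
  have shrink : ∑ i ∈ Finset.range n, ((-1:ℝ)^i * (J.choose i : ℝ) * ((m+i).descFactorial n : ℝ))
      = ∑ i ∈ Finset.range (J+1), ((-1:ℝ)^i * (J.choose i : ℝ) * ((m+i).descFactorial n : ℝ)) := by
    symm
    apply Finset.sum_subset (Finset.range_subset_range.mpr (by omega))
    intro i _ hi
    rw [Nat.choose_eq_zero_of_lt (show J < i by simp only [Finset.mem_range] at hi; omega)]
    simp
  rw [shrink]
  have cast_alt : ∑ i ∈ Finset.range (J+1),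
      ((-1:ℝ)^i * (J.choose i : ℝ) * ((m+i).descFactorial n : ℝ))
      = (-1:ℝ)^J * (n.descFactorial J : ℝ) * (m.descFactorial (n-J) : ℝ) := by
    exact_mod_cast alt_sum n J m
  rw [cast_alt, show n - J = k+1 by omega]
  have d1 : (n.descFactorial J : ℝ) = ((n:ℝ) * ((n-1).factorial:ℝ))/((k+1).factorial:ℝ) := by
    rw [cast_descFactorial (show J ≤ n by omega), show n - J = k+1 by omega]
    congr 1
    exact_mod_cast (congrArg (Nat.cast (R:=ℝ)) (Nat.mul_factorial_pred (show n ≠ 0 by omega))).symm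
  have d2 : (m.descFactorial (k+1) : ℝ) = (m.factorial:ℝ)/((m-1-k).factorial:ℝ) := by
    rw [cast_descFactorial (show k+1 ≤ m by omega), show m - (k+1) = m-1-k by omega]
  have d3 : ((m-1).descFactorial k : ℝ) = ((m-1).factorial:ℝ)/((m-1-k).factorial:ℝ) :=
    cast_descFactorial (show k ≤ m-1 by omega)
  have d4 : ((n-1).descFactorial k : ℝ) = ((n-1).factorial:ℝ)/((n-1-k).factorial:ℝ) :=
    cast_descFactorial (show k ≤ n-1 by omega)
  have sgn : (-1:ℝ)^(n+1+k) = (-1:ℝ)^J := by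
    rw [show n+1+k = J + 2*(k+1) by omega, pow_add, pow_mul]
    norm_num
  rw [d1, d2, d3, d4, sgn, hc]
  have z1 := nz m; have z2 := nz k; have z3 := nz (n-1-k); have z4 := nz (k+1)
  have z5 := nz (m-1-k); have z6 := nz (n-1); have z7 := nz (m-1)
  field_simp

lemma onePlusPow (x : ℝ) {t n : ℕ} (ht : t < n) :
    (1+x)^t = ∑ k ∈ Finset.range n, ((t.choose k : ℕ):ℝ) * x^k := by
  rw [add_comm (1:ℝ) x, add_pow]
  simp only [one_pow, mul_one]
  rw [show ∑ k ∈ Finset.range (t+1), x^k * (t.choose k : ℝ)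
      = ∑ k ∈ Finset.range (t+1), ((t.choose k : ℕ):ℝ) * x^k from
    Finset.sum_congr rfl (fun k _ => by ring)]
  apply Finset.sum_subset (Finset.range_subset_range.mpr (by omega))
  intro k _ hk
  rw [Nat.choose_eq_zero_of_lt (by simp only [Finset.mem_range] at hk; omega)]
  simp

/-- The hypergeometric identity arising from the matrix elements of the quantum
mutation equation (at `q = 1`): for integers `m ≥ n ≥ 1` and real `x` in the common
domain of convergence (`x > 1`),
`x^{-m} Γ(m)/(Γ(n)Γ(m−n+1)) ₂F₁(m, m+1; m−n+1; −1/x)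
  = (−1)^{n+1} n x / (1+x)^{m+n} ₂F₁(1−m, 1−n; 2; −x)`. -/
theorem hypergeometric_mutation_identity (m n : ℕ) (hn : 1 ≤ n) (hm : n ≤ m)
    (x : ℝ) (hx : 1 < x) :
    x ^ (-(m : ℝ)) * (Real.Gamma m / (Real.Gamma n * Real.Gamma ((m : ℝ) - n + 1))) *
        hypGeom m ((m : ℝ) + 1) ((m : ℝ) - n + 1) (-1 / x) =
      (-1 : ℝ) ^ (n + 1) * n * x / (1 + x) ^ (m + n) *
        hypGeom (1 - (m : ℝ)) (1 - (n : ℝ)) 2 (-x) := by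
  have hm1 : 1 ≤ m := le_trans hn hm
  have hx0 : (0:ℝ) < x := lt_trans one_pos hx
  have hxne : x ≠ 0 := ne_of_gt hx0
  have h1x : (0:ℝ) < 1 + x := by linarith
  have h1xne : (1:ℝ) + x ≠ 0 := ne_of_gt h1x
  have hz : |(-1/x : ℝ)| < 1 := by
    rw [abs_div, abs_neg, abs_one, abs_of_pos hx0, div_lt_one hx0]
    exact hx
  have hGm : Real.Gamma (m:ℝ) = ((m-1).factorial : ℝ) := by
    rw [show (m:ℝ) = ((m-1:ℕ):ℝ) + 1 by push_cast [Nat.cast_sub hm1]; ring]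
    exact Real.Gamma_nat_eq_factorial _
  have hGn : Real.Gamma (n:ℝ) = ((n-1).factorial : ℝ) := by
    rw [show (n:ℝ) = ((n-1:ℕ):ℝ) + 1 by push_cast [Nat.cast_sub hn]; ring]
    exact Real.Gamma_nat_eq_factorial _
  have hGmn : Real.Gamma ((m:ℝ) - n + 1) = ((m-n).factorial : ℝ) := by
    rw [show (m:ℝ) - n + 1 = ((m-n:ℕ):ℝ) + 1 by push_cast [Nat.cast_sub hm]; ring]
    exact Real.Gamma_nat_eq_factorial _
  rw [hGm, hGn, hGmn, key1 m n hn hm hz, key2 m n hn hm (-x),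
      Real.rpow_neg hx0.le, Real.rpow_natCast,
      show ((m-1).factorial:ℝ)/(((n-1).factorial:ℝ)*((m-n).factorial:ℝ)) = Br m n from rfl]
  have lhs_eq : (x^m)⁻¹ * Br m n *
      (∑ i ∈ Finset.range n, Pr m n i * (-1/x)^i * ((1-(-1/x))^(m+1+i))⁻¹)
      = x * ((1+x)^(m+n))⁻¹ *
        ∑ i ∈ Finset.range n, Br m n * Pr m n i * (-1:ℝ)^i * (1+x)^(n-1-i) := by
    rw [Finset.mul_sum, Finset.mul_sum]
    apply Finset.sum_congr rfl
    intro i hi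
    have hin : i ≤ n - 1 := by simp only [Finset.mem_range] at hi; omega
    have e1 : (1:ℝ) - (-1/x) = (1+x)/x := by field_simp; ring
    have e3 : ((1:ℝ)+x)^(m+n) = (1+x)^(m+1+i) * (1+x)^(n-1-i) := by
      rw [← pow_add]; congr 1; omega
    rw [e1, e3]
    have hp1 : (x:ℝ)^(m+1+i) = x^m * x^i * x := by ring
    have nz1 : (x:ℝ)^m ≠ 0 := pow_ne_zero _ hxne
    have nz2 : (x:ℝ)^i ≠ 0 := pow_ne_zero _ hxne
    have nz3 : ((1:ℝ)+x)^(m+1+i) ≠ 0 := pow_ne_zero _ h1xne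
    have nz4 : ((1:ℝ)+x)^(n-1-i) ≠ 0 := pow_ne_zero _ h1xne
    simp only [div_pow, inv_div]
    rw [hp1]
    field_simp
  rw [lhs_eq]
  have poly : ∑ i ∈ Finset.range n, Br m n * Pr m n i * (-1:ℝ)^i * (1+x)^(n-1-i)
      = ∑ k ∈ Finset.range n, ((-1:ℝ)^(n+1+k) * n *
          ((((m-1).descFactorial k : ℝ) * ((n-1).descFactorial k : ℝ)) /
            (((k+1).factorial : ℝ) * (k.factorial : ℝ)))) * x^k := by
    have expand : ∀ i ∈ Finset.range n,
        Br m n * Pr m n i * (-1:ℝ)^i * (1+x)^(n-1-i)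
        = ∑ k ∈ Finset.range n, Br m n * Pr m n i * (-1:ℝ)^i * (((n-1-i).choose k : ℝ) * x^k) := by
      intro i hi
      rw [onePlusPow x (show n-1-i < n by omega), Finset.mul_sum]
    rw [Finset.sum_congr rfl expand, Finset.sum_comm]
    apply Finset.sum_congr rfl
    intro k hk
    have hkn : k < n := by simpa using hk
    rw [← pk m n k hn hm hkn, Finset.sum_mul]
    exact Finset.sum_congr rfl (fun i _ => by ring)
  rw [poly, Finset.mul_sum,
      show (-1:ℝ)^(n+1) * n * x / (1+x)^(m+n) = (-1:ℝ)^(n+1) * n * x * ((1+x)^(m+n))⁻¹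
        from div_eq_mul_inv _ _,
      Finset.mul_sum]
  apply Finset.sum_congr rfl
  intro k _
  rw [show ((-x):ℝ)^k = (-1)^k * x^k by rw [neg_eq_neg_one_mul, mul_pow],
      show ((-1):ℝ)^(n+1+k) = (-1)^(n+1) * (-1)^k from pow_add (-1) (n+1) k]
  ring

end
end
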